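/- Define m_n to be the minimum of Σᵢ λᵢ² over all partitions λ of n with nonnegative rank (largest part at least the number of parts). Then the sequence (m_n) is strictly increasing: m_n < m_{n+1} for all n ≥ 1. -/

import Mathlib

/-- The minimal sum of squares of parts over partitions of n with nonnegative rank. -/
noncomputable def minSumSq (n : ℕ) : ℕ :=
  sInf {s | ∃ P : n.Partition, P.parts.card ≤ P.parts.sup ∧
    (P.parts.map (fun x => x ^ 2)).sum = s}

lemma multiset_sup_mem (s : Multiset ℕ) (hs : s ≠ 0) : s.sup ∈ s := by
  induction s using Multiset.induction with
  | empty => simp at hs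
  | cons a t ih =>
    rcases eq_or_ne t 0 with rfl | ht
    · simp
    · rw [Multiset.sup_cons]
      rcases le_total a t.sup with h | h
      · rw [sup_eq_right.2 h]; exact Multiset.mem_cons_of_mem (ih ht)
      · rw [sup_eq_left.2 h]; exact Multiset.mem_cons_self a t

lemma minSumSq_nonempty (m : ℕ) (hm : 1 ≤ m) :
    {s | ∃ P : m.Partition, P.parts.card ≤ P.parts.sup ∧
      (P.parts.map (fun x => x ^ 2)).sum = s}.Nonempty := by
  refine ⟨(({m} : Multiset ℕ).map (fun x => x ^ 2)).sum,
    ⟨⟨{m}, ?_, by simp⟩, ?_, rfl⟩⟩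
  · intro i hi
    simp only [Multiset.mem_singleton] at hi
    omega
  · simp only [Multiset.card_singleton, Multiset.sup_singleton]
    exact hm

/-- The sequence of minima is strictly increasing. -/
theorem stmt_10 (n : ℕ) (hn : 1 ≤ n) : minSumSq n < minSumSq (n + 1) := by
  classical
  have hmem : minSumSq (n + 1) ∈ {s | ∃ P : (n + 1).Partition,
      P.parts.card ≤ P.parts.sup ∧ (P.parts.map (fun x => x ^ 2)).sum = s} :=
    Nat.sInf_mem (minSumSq_nonempty (n + 1) (by omega))
  obtain ⟨P, hP, hPs⟩ := hmem
  rw [← hPs]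
  have hsum : P.parts.sum = n + 1 := P.parts_sum
  have hne0 : P.parts ≠ 0 := by
    intro h0; rw [h0] at hsum; simp at hsum
  by_cases h1 : (1 : ℕ) ∈ P.parts
  · -- remove a part equal to 1
    set E := P.parts.erase 1 with hE
    have hcons : (1 : ℕ) ::ₘ E = P.parts := Multiset.cons_erase h1
    have hsumE : E.sum = n := by
      rw [← hcons, Multiset.sum_cons] at hsum; omega
    have hsupge : 2 ≤ P.parts.sup := by
      by_contra hlt
      push_neg at hlt
      have hle : P.parts.sum ≤ P.parts.card • 1 :=
        Multiset.sum_le_card_nsmul P.parts 1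
          (fun x hx => le_trans (Multiset.le_sup hx) (by omega))
      simp only [smul_eq_mul, mul_one] at hle
      omega
    have hsupE : P.parts.sup = max 1 E.sup := by
      rw [← hcons, Multiset.sup_cons]
    have hcard : P.parts.card = E.card + 1 := by
      rw [← hcons, Multiset.card_cons]
    let Q : n.Partition :=
      ⟨E, fun hi => P.parts_pos (Multiset.mem_of_mem_erase hi), hsumE⟩
    have hQ : Q.parts.card ≤ Q.parts.sup := by
      show E.card ≤ E.sup
      rw [hcard, hsupE] at hP
      omega
    have hle : minSumSq n ≤ (E.map (fun x => x ^ 2)).sum :=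
      Nat.sInf_le ⟨Q, hQ, rfl⟩
    have hlt : (E.map (fun x => x ^ 2)).sum < (P.parts.map (fun x => x ^ 2)).sum := by
      rw [← hcons, Multiset.map_cons, Multiset.sum_cons]
      omega
    omega
  · -- all parts are at least 2
    have h2 : ∀ x ∈ P.parts, 2 ≤ x := by
      intro x hx
      have hpos := P.parts_pos hx
      have : x ≠ 1 := fun e => h1 (e ▸ hx)
      omega
    have key : ∃ p ∈ P.parts, 2 ≤ p ∧
        P.parts.card ≤ (p - 1) ⊔ (P.parts.erase p).sup := by
      by_cases hex : ∃ p ∈ P.parts, p < P.parts.sup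
      · obtain ⟨p, hp, hplt⟩ := hex
        refine ⟨p, hp, h2 p hp, ?_⟩
        have hsupmem : P.parts.sup ∈ P.parts.erase p :=
          (Multiset.mem_erase_of_ne (by omega)).2 (multiset_sup_mem _ hne0)
        exact hP.trans ((Multiset.le_sup hsupmem).trans le_sup_right)
      · push_neg at hex
        have hm : P.parts.sup ∈ P.parts := multiset_sup_mem _ hne0
        refine ⟨P.parts.sup, hm, h2 _ hm, ?_⟩
        by_cases hc : P.parts.card ≤ 1
        · have h21 : 1 ≤ P.parts.sup - 1 := by have := h2 _ hm; omega
          exact hc.trans (h21.trans le_sup_left)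
        · have hE0 : P.parts.erase P.parts.sup ≠ 0 := by
            intro h0
            have hce := Multiset.card_erase_of_mem hm
            rw [h0] at hce
            simp at hce
            omega
          have hsupEmem := multiset_sup_mem _ hE0
          have heq : (P.parts.erase P.parts.sup).sup = P.parts.sup :=
            le_antisymm
              (Multiset.sup_le.2 fun b hb =>
                Multiset.le_sup (Multiset.mem_of_mem_erase hb))
              (hex _ (Multiset.mem_of_mem_erase hsupEmem))
          exact hP.trans (heq.ge.trans le_sup_right)
    obtain ⟨p, hp, hp2, hkey⟩ := key
    set E := P.parts.erase p with hE
    have hcons : p ::ₘ E = P.parts := Multiset.cons_erase hp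
    have hsumE : ((p - 1) ::ₘ E).sum = n := by
      rw [← hcons, Multiset.sum_cons] at hsum
      rw [Multiset.sum_cons]
      omega
    let Q : n.Partition := ⟨(p - 1) ::ₘ E, ?_, hsumE⟩
    swap
    · intro i hi
      rcases Multiset.mem_cons.1 hi with rfl | hi'
      · omega
      · exact P.parts_pos (Multiset.mem_of_mem_erase hi')
    have hQ : Q.parts.card ≤ Q.parts.sup := by
      show ((p - 1) ::ₘ E).card ≤ ((p - 1) ::ₘ E).sup
      rw [Multiset.card_cons, Multiset.sup_cons]
      have hcE : P.parts.card = E.card + 1 := by rw [← hcons, Multiset.card_cons]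
      omega
    have hle : minSumSq n ≤ (((p - 1) ::ₘ E).map (fun x => x ^ 2)).sum :=
      Nat.sInf_le ⟨Q, hQ, rfl⟩
    have hsq : (p - 1) ^ 2 < p ^ 2 :=
      Nat.pow_lt_pow_left (by omega) (by omega)
    have hlt : (((p - 1) ::ₘ E).map (fun x => x ^ 2)).sum <
        (P.parts.map (fun x => x ^ 2)).sum := by
      rw [← hcons, Multiset.map_cons, Multiset.sum_cons, Multiset.map_cons,
        Multiset.sum_cons]
      omega
    omega
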